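/- The set of all two-colored partitions all of whose blocks have at most two legs and all of whose two-leg blocks are neutral is a category of two-colored partitions. -/

import Mathlib

noncomputable section
attribute [local instance] Classical.propDecidable

/-- A two-colored partition: two rows of points colored white (`true`) or black (`false`),
together with a set partition (setoid) of all points into blocks. -/
structure TCP where
  upper : ℕ
  lower : ℕ
  upColor : Fin upper → Bool
  loColor : Fin lower → Bool
  rel : Setoid (Fin upper ⊕ Fin lower)

namespace TCP

/-- The points of a partition. -/
abbrev Point (p : TCP) := Fin p.upper ⊕ Fin p.lower

/-- Native color of a point. -/
def color (p : TCP) : p.Point → Bool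
  | .inl j => p.upColor j
  | .inr i => p.loColor i

/-- Normalized color: inverted on the upper row. -/
def ncolor (p : TCP) : p.Point → Bool
  | .inl j => !(p.upColor j)
  | .inr i => p.loColor i

/-- Sign of a point: `+1` for normalized white, `-1` for normalized black. -/
def sgn (p : TCP) (x : p.Point) : ℤ := if p.ncolor x then 1 else -1

/-- Color sum of a finite set of points. -/
def csum (p : TCP) (S : Finset p.Point) : ℤ := ∑ x ∈ S, p.sgn x

/-- Total color sum Σ(p). -/
def tsum (p : TCP) : ℤ := p.csum Finset.univ

/-- Total number of points. -/
def size (p : TCP) : ℕ := p.upper + p.lower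

/-- Position in the counter-clockwise cyclic order: lower points left to right,
then upper points right to left. -/
def pos (p : TCP) : p.Point → ℕ
  | .inr i => i
  | .inl j => p.lower + (p.upper - 1 - j)

/-- Cyclic position of `y` relative to `x`. -/
def relpos (p : TCP) (x y : p.Point) : ℕ := (p.size + p.pos y - p.pos x) % p.size

/-- Half-open cyclic interval `]x,y]`. -/
def Ioc (p : TCP) (x y : p.Point) : Finset p.Point :=
  Finset.univ.filter (fun z => 0 < p.relpos x z ∧ p.relpos x z ≤ p.relpos x y)

/-- Open cyclic interval `]x,y[`. -/
def Ioo (p : TCP) (x y : p.Point) : Finset p.Point :=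
  Finset.univ.filter (fun z => 0 < p.relpos x z ∧ p.relpos x z < p.relpos x y)

/-- The color distance between two points. -/
def cdist (p : TCP) (x y : p.Point) : ℤ :=
  if x = y then p.tsum
  else if p.ncolor x = p.ncolor y then p.csum (p.Ioc x y)
  else p.csum (p.Ioo x y)

/-- The block of a point. -/
def blockOf (p : TCP) (x : p.Point) : Finset p.Point :=
  Finset.univ.filter (fun y => p.rel.r x y)

/-- A finite set of points is a block of `p`. -/
def IsBlock (p : TCP) (B : Finset p.Point) : Prop := ∃ x, B = p.blockOf x

/-- `(a,b,c,d)` is ordered in the cyclic order of `p`. -/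
def Ordered4 (p : TCP) (a b c d : p.Point) : Prop :=
  0 < p.relpos a b ∧ p.relpos a b < p.relpos a c ∧ p.relpos a c < p.relpos a d

/-- Two sets of points cross each other. -/
def Cross (p : TCP) (B₁ B₂ : Finset p.Point) : Prop :=
  ∃ a ∈ B₁, ∃ b ∈ B₁, ∃ a' ∈ B₂, ∃ b' ∈ B₂, p.Ordered4 a a' b b'

/-! ### The analyzer -/

/-- Set of block sizes. -/
def Fset (S : Set TCP) : Set ℕ :=
  {n | ∃ p ∈ S, ∃ B : Finset p.Point, p.IsBlock B ∧ B.card = n}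

/-- Set of block color sums. -/
def Vset (S : Set TCP) : Set ℤ :=
  {v | ∃ p ∈ S, ∃ B : Finset p.Point, p.IsBlock B ∧ p.csum B = v}

/-- Set of total color sums. -/
def Sset (S : Set TCP) : Set ℤ := {s | ∃ p ∈ S, p.tsum = s}

/-- Set of color distances between cyclically subsequent legs of the same block
having the same normalized color. -/
def Lset (S : Set TCP) : Set ℤ :=
  {d | ∃ p ∈ S, ∃ B : Finset p.Point, p.IsBlock B ∧ ∃ a ∈ B, ∃ b ∈ B, a ≠ b ∧
        p.Ioo a b ∩ B = ∅ ∧ p.ncolor a = p.ncolor b ∧ p.cdist a b = d}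

/-- Set of color distances between cyclically subsequent legs of the same block
having different normalized colors. -/
def Kset (S : Set TCP) : Set ℤ :=
  {d | ∃ p ∈ S, ∃ B : Finset p.Point, p.IsBlock B ∧ ∃ a ∈ B, ∃ b ∈ B, a ≠ b ∧
        p.Ioo a b ∩ B = ∅ ∧ p.ncolor a ≠ p.ncolor b ∧ p.cdist a b = d}

/-- Set of color distances between legs of two crossing blocks. -/
def Xset (S : Set TCP) : Set ℤ :=
  {d | ∃ p ∈ S, ∃ B₁ B₂ : Finset p.Point, p.IsBlock B₁ ∧ p.IsBlock B₂ ∧ B₁ ≠ B₂ ∧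
        p.Cross B₁ B₂ ∧ ∃ a ∈ B₁, ∃ b ∈ B₂, p.cdist a b = d}

/-- The parameter domain. -/
abbrev Param := Set ℕ × Set ℤ × Set ℤ × Set ℤ × Set ℤ × Set ℤ

/-- The analyzer `Z = (F, V, Σ, L, K, X)`. -/
def Z (S : Set TCP) : Param := (Fset S, Vset S, Sset S, Lset S, Kset S, Xset S)

/-! ### Operations on partitions -/

/-- Componentwise relation on a sum type. -/
def sumRel {α β : Type*} (s : α → α → Prop) (t : β → β → Prop) : α ⊕ β → α ⊕ β → Prop
  | .inl a, .inl b => s a b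
  | .inr a, .inr b => t a b
  | _, _ => False

/-- Componentwise setoid on a sum type. -/
def sumSetoid {α β : Type*} (s : Setoid α) (t : Setoid β) : Setoid (α ⊕ β) where
  r := sumRel s.r t.r
  iseqv := by
    refine ⟨?_, ?_, ?_⟩
    · rintro (a | a) <;> exact Setoid.refl _
    · rintro (a | a) (b | b) h <;> first | exact Setoid.symm h | exact h.elim
    · rintro (a | a) (b | b) (c | c) h₁ h₂ <;>
        first | exact Setoid.trans h₁ h₂ | exact h₁.elim | exact h₂.elim

/-- Identification of the points of a tensor product with a sum of points. -/
def ptmap (p q : TCP) :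
    (Fin (p.upper + q.upper) ⊕ Fin (p.lower + q.lower)) → (p.Point ⊕ q.Point)
  | .inl j => (finSumFinEquiv.symm j).elim (fun a => .inl (.inl a)) (fun a => .inr (.inl a))
  | .inr i => (finSumFinEquiv.symm i).elim (fun a => .inl (.inr a)) (fun a => .inr (.inr a))

/-- Tensor product: horizontal concatenation. -/
def tensor (p q : TCP) : TCP where
  upper := p.upper + q.upper
  lower := p.lower + q.lower
  upColor := fun j => (finSumFinEquiv.symm j).elim p.upColor q.upColor
  loColor := fun i => (finSumFinEquiv.symm i).elim p.loColor q.loColor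
  rel := Setoid.comap (ptmap p q) (sumSetoid p.rel q.rel)

/-- Embedding of the points of `p` into the points of `p.tensor q`. -/
def tinl (p q : TCP) : p.Point → (p.tensor q).Point
  | .inl j => Sum.inl (Fin.castAdd q.upper j)
  | .inr i => Sum.inr (Fin.castAdd q.lower i)

/-- Embedding of the points of `q` into the points of `p.tensor q`. -/
def tinr (p q : TCP) : q.Point → (p.tensor q).Point
  | .inl j => Sum.inl (Fin.natAdd p.upper j)
  | .inr i => Sum.inr (Fin.natAdd p.lower i)

/-- Involution: swapping the rows. -/
def invol (p : TCP) : TCP where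
  upper := p.lower
  lower := p.upper
  upColor := p.loColor
  loColor := p.upColor
  rel := Setoid.comap Sum.swap p.rel

/-- `(p, q)` is composable: the upper row of `p` matches the lower row of `q`. -/
structure Composable (p q : TCP) : Prop where
  len : p.upper = q.lower
  col : ∀ j : Fin p.upper, p.upColor j = q.loColor (Fin.cast len j)

/-- Generating relation for the composition of `p` and `q`. -/
def compRel (p q : TCP) (h : p.upper = q.lower) :
    (q.Point ⊕ p.Point) → (q.Point ⊕ p.Point) → Prop := fun x y =>
  (∃ a b, x = .inl a ∧ y = .inl b ∧ q.rel.r a b) ∨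
  (∃ a b, x = .inr a ∧ y = .inr b ∧ p.rel.r a b) ∨
  (∃ j : Fin p.upper, x = .inl (.inr (Fin.cast h j)) ∧ y = .inr (.inl j)) ∨
  (∃ j : Fin p.upper, y = .inl (.inr (Fin.cast h j)) ∧ x = .inr (.inl j))

/-- Composition: vertical concatenation, with blocks joined along the middle row. -/
def comp (p q : TCP) (h : Composable p q) : TCP where
  upper := q.upper
  lower := p.lower
  upColor := q.upColor
  loColor := p.loColor
  rel := Setoid.comap
    (fun x : Fin q.upper ⊕ Fin p.lower => match x with
      | .inl j => Sum.inl (Sum.inl j : q.Point)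
      | .inr i => Sum.inr (Sum.inr i : p.Point))
    (Relation.EqvGen.setoid (compRel p q h.len))

/-- The empty partition. -/
def emptyP : TCP := ⟨0, 0, Fin.elim0, Fin.elim0, ⊤⟩

/-- The identity partition of color `c`: one upper and one lower point of color `c`
joined in one block. -/
def idPart (c : Bool) : TCP := ⟨1, 1, fun _ => c, fun _ => c, ⊤⟩

/-- The one-row pair partition with two lower points of colors `c₁`, `c₂` in one block. -/
def lpair (c₁ c₂ : Bool) : TCP := ⟨0, 2, Fin.elim0, fun i => if i = 0 then c₁ else c₂, ⊤⟩

/-- A category of two-colored partitions. -/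
def IsCategory (C : Set TCP) : Prop :=
  emptyP ∈ C ∧ idPart true ∈ C ∧ idPart false ∈ C ∧
  lpair true false ∈ C ∧ lpair false true ∈ C ∧
  (∀ p q, p ∈ C → q ∈ C → p.tensor q ∈ C) ∧
  (∀ p, p ∈ C → p.invol ∈ C) ∧
  (∀ p q (h : Composable p q), p ∈ C → q ∈ C → comp p q h ∈ C)

/-! ### Rotations, verticolor reflection, erasing -/

/-- Rotate the leftmost upper point down (identity if the upper row is empty). -/
def rotDownL (p : TCP) : TCP :=
  if h : 0 < p.upper then
    { upper := p.upper - 1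
      lower := p.lower + 1
      upColor := fun j => p.upColor ⟨j + 1, by have := j.isLt; omega⟩
      loColor := fun i => Fin.cases (!(p.upColor ⟨0, h⟩)) (fun i' => p.loColor i') i
      rel := Setoid.comap
        (fun x : Fin (p.upper - 1) ⊕ Fin (p.lower + 1) => match x with
          | .inl j => (Sum.inl ⟨j + 1, by have := j.isLt; omega⟩ : p.Point)
          | .inr i => Fin.cases (Sum.inl ⟨0, h⟩ : p.Point) (fun i' => (Sum.inr i' : p.Point)) i)
        p.rel }
  else p

/-- Rotate the rightmost upper point down (identity if the upper row is empty). -/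
def rotDownR (p : TCP) : TCP :=
  if h : 0 < p.upper then
    { upper := p.upper - 1
      lower := p.lower + 1
      upColor := fun j => p.upColor ⟨j, by have := j.isLt; omega⟩
      loColor := fun i =>
        Fin.lastCases (!(p.upColor ⟨p.upper - 1, by omega⟩)) (fun i' => p.loColor i') i
      rel := Setoid.comap
        (fun x : Fin (p.upper - 1) ⊕ Fin (p.lower + 1) => match x with
          | .inl j => (Sum.inl ⟨j, by have := j.isLt; omega⟩ : p.Point)
          | .inr i => Fin.lastCases (Sum.inl ⟨p.upper - 1, by omega⟩ : p.Point)
              (fun i' => (Sum.inr i' : p.Point)) i)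
        p.rel }
  else p

/-- Rotate the leftmost lower point up (identity if the lower row is empty). -/
def rotUpL (p : TCP) : TCP :=
  if h : 0 < p.lower then
    { upper := p.upper + 1
      lower := p.lower - 1
      upColor := fun j => Fin.cases (!(p.loColor ⟨0, h⟩)) (fun j' => p.upColor j') j
      loColor := fun i => p.loColor ⟨i + 1, by have := i.isLt; omega⟩
      rel := Setoid.comap
        (fun x : Fin (p.upper + 1) ⊕ Fin (p.lower - 1) => match x with
          | .inl j => Fin.cases (Sum.inr ⟨0, h⟩ : p.Point) (fun j' => (Sum.inl j' : p.Point)) j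
          | .inr i => (Sum.inr ⟨i + 1, by have := i.isLt; omega⟩ : p.Point))
        p.rel }
  else p

/-- Rotate the rightmost lower point up (identity if the lower row is empty). -/
def rotUpR (p : TCP) : TCP :=
  if h : 0 < p.lower then
    { upper := p.upper + 1
      lower := p.lower - 1
      upColor := fun j =>
        Fin.lastCases (!(p.loColor ⟨p.lower - 1, by omega⟩)) (fun j' => p.upColor j') j
      loColor := fun i => p.loColor ⟨i, by have := i.isLt; omega⟩
      rel := Setoid.comap
        (fun x : Fin (p.upper + 1) ⊕ Fin (p.lower - 1) => match x with
          | .inl j => Fin.lastCases (Sum.inr ⟨p.lower - 1, by omega⟩ : p.Point)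
              (fun j' => (Sum.inl j' : p.Point)) j
          | .inr i => (Sum.inr ⟨i, by have := i.isLt; omega⟩ : p.Point))
        p.rel }
  else p

/-- Verticolor reflection: reverse both rows and invert all colors. -/
def vreflect (p : TCP) : TCP where
  upper := p.upper
  lower := p.lower
  upColor := fun j => !(p.upColor j.rev)
  loColor := fun i => !(p.loColor i.rev)
  rel := Setoid.comap (Sum.map Fin.rev Fin.rev) p.rel

/-- `{a, b}` is a turn: two cyclically consecutive points of inverse normalized colors. -/
def IsTurn (p : TCP) (a b : p.Point) : Prop :=
  p.relpos a b = 1 ∧ p.ncolor a ≠ p.ncolor b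

/-- `e` identifies the points of `q` with the points of `p` outside `{a, b}`, preserving
rows, colors and order, and `q` carries the block structure obtained from `p` by erasing
`{a, b}` and merging all blocks meeting `{a, b}`. -/
def IsErasingMap (p : TCP) (a b : p.Point) (q : TCP) (e : q.Point → p.Point) : Prop :=
  Function.Injective e ∧
  Set.range e = {x | x ≠ a ∧ x ≠ b} ∧
  (∀ j : Fin q.upper, ∃ j', e (.inl j) = Sum.inl j') ∧
  (∀ i : Fin q.lower, ∃ i', e (.inr i) = Sum.inr i') ∧
  (∀ j₁ j₂ : Fin q.upper, ∀ j₁' j₂' : Fin p.upper,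
    e (.inl j₁) = Sum.inl j₁' → e (.inl j₂) = Sum.inl j₂' → (j₁ < j₂ ↔ j₁' < j₂')) ∧
  (∀ i₁ i₂ : Fin q.lower, ∀ i₁' i₂' : Fin p.lower,
    e (.inr i₁) = Sum.inr i₁' → e (.inr i₂) = Sum.inr i₂' → (i₁ < i₂ ↔ i₁' < i₂')) ∧
  (∀ x, q.color x = p.color (e x)) ∧
  (∀ x y, q.rel.r x y ↔
    (p.rel.r (e x) (e y) ∨
      ((p.rel.r (e x) a ∨ p.rel.r (e x) b) ∧ (p.rel.r (e y) a ∨ p.rel.r (e y) b))))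

/-- `q` is obtained from `p` by erasing the turn `{a, b}`. -/
def IsErasing (p : TCP) (a b : p.Point) (q : TCP) : Prop :=
  p.IsTurn a b ∧ ∃ e : q.Point → p.Point, IsErasingMap p a b q e

end TCP
namespace Stmt12Aux
open TCP

/-- Pointwise characterization of the class. -/
def PW (p : TCP) : Prop :=
  (∀ x y z : p.Point, p.rel.r x y → p.rel.r x z → y ≠ x → z ≠ x → y = z) ∧
  (∀ x y : p.Point, p.rel.r x y → x ≠ y → p.ncolor x ≠ p.ncolor y)

lemma csum_pair (p : TCP) {x y : p.Point} (h : x ≠ y) :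
    p.csum {x, y} = p.sgn x + p.sgn y := by
  simp [TCP.csum, Finset.sum_pair h]

lemma sgn_add_eq_zero (p : TCP) (x y : p.Point) :
    p.sgn x + p.sgn y = 0 ↔ p.ncolor x ≠ p.ncolor y := by
  unfold TCP.sgn
  cases hx : p.ncolor x <;> cases hy : p.ncolor y <;> simp

lemma mem_blockOf (p : TCP) (x y : p.Point) : y ∈ p.blockOf x ↔ p.rel.r x y := by
  simp [TCP.blockOf]

lemma mem_iff_PW (p : TCP) :
    (∀ B : Finset p.Point, p.IsBlock B → B.card ≤ 2 ∧ (B.card = 2 → p.csum B = 0)) ↔ PW p := by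
  constructor
  · intro H
    have Huniq : ∀ x y z : p.Point, p.rel.r x y → p.rel.r x z → y ≠ x → z ≠ x → y = z := by
      intro x y z hxy hxz hyx hzx
      by_contra hyz
      have hsub : ({x, y, z} : Finset p.Point) ⊆ p.blockOf x := by
        intro w hw
        simp only [Finset.mem_insert, Finset.mem_singleton] at hw
        rcases hw with rfl | rfl | rfl
        · exact (mem_blockOf p w w).2 (p.rel.iseqv.refl w)
        · exact (mem_blockOf p x w).2 hxy
        · exact (mem_blockOf p x w).2 hxz
      have hcard : ({x, y, z} : Finset p.Point).card = 3 := by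
        rw [Finset.card_insert_of_notMem (by simp [Ne.symm hyx, Ne.symm hzx]),
          Finset.card_insert_of_notMem (by simp [hyz]), Finset.card_singleton]
      have h1 := (H _ ⟨x, rfl⟩).1
      have h2 := Finset.card_le_card hsub
      omega
    refine ⟨Huniq, ?_⟩
    intro x y hxy hne
    have hBeq : p.blockOf x = {x, y} := by
      ext z
      simp only [mem_blockOf, Finset.mem_insert, Finset.mem_singleton]
      constructor
      · intro hz
        by_cases hzx : z = x
        · exact Or.inl hzx
        · exact Or.inr (Huniq x z y hz hxy hzx (Ne.symm hne))
      · rintro (rfl | rfl)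
        · exact p.rel.iseqv.refl z
        · exact hxy
    have h2 : (p.blockOf x).card = 2 := by rw [hBeq, Finset.card_pair hne]
    have h3 := (H _ ⟨x, rfl⟩).2 h2
    rw [hBeq, csum_pair p hne] at h3
    exact (sgn_add_eq_zero p x y).1 h3
  · rintro ⟨h1, h2⟩ B ⟨x, rfl⟩
    by_cases hy : ∃ y, p.rel.r x y ∧ y ≠ x
    · obtain ⟨y, hxy, hyx⟩ := hy
      have hxney : x ≠ y := Ne.symm hyx
      have hBeq : p.blockOf x = {x, y} := by
        ext z
        simp only [mem_blockOf, Finset.mem_insert, Finset.mem_singleton]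
        constructor
        · intro hz
          by_cases hzx : z = x
          · exact Or.inl hzx
          · exact Or.inr (h1 x z y hz hxy hzx hyx)
        · rintro (rfl | rfl)
          · exact p.rel.iseqv.refl z
          · exact hxy
      constructor
      · rw [hBeq, Finset.card_pair hxney]
      · intro _
        rw [hBeq, csum_pair p hxney]
        exact (sgn_add_eq_zero p x y).2 (h2 x y hxy hxney)
    · push_neg at hy
      have hBeq : p.blockOf x = {x} := by
        ext z
        simp only [mem_blockOf, Finset.mem_singleton]
        constructor
        · intro hz
          by_contra hzx
          exact hzx (hy z hz)
        · rintro rfl; exact p.rel.iseqv.refl z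
      rw [hBeq]
      simp

lemma PW_empty : PW TCP.emptyP := by
  constructor
  · rintro (x | x) <;> exact x.elim0
  · rintro (x | x) <;> exact x.elim0

lemma PW_id (c : Bool) : PW (TCP.idPart c) := by
  have hpt : ∀ x : (TCP.idPart c).Point,
      x = Sum.inl ⟨0, Nat.one_pos⟩ ∨ x = Sum.inr ⟨0, Nat.one_pos⟩ := by
    rintro (j | i)
    · left
      congr 1
      have hj : j.val < 1 := j.isLt
      exact Fin.ext (show j.val = 0 by omega)
    · right
      congr 1
      have hi : i.val < 1 := i.isLt
      exact Fin.ext (show i.val = 0 by omega)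
  constructor
  · intro x y z _ _ hyx hzx
    rcases hpt x with rfl | rfl <;> rcases hpt y with rfl | rfl <;>
      rcases hpt z with rfl | rfl <;> simp_all
  · intro x y _ hxy
    rcases hpt x with rfl | rfl <;> rcases hpt y with rfl | rfl <;>
      simp_all [TCP.ncolor, TCP.idPart]

lemma PW_lpair (c₁ c₂ : Bool) (h : c₁ ≠ c₂) : PW (TCP.lpair c₁ c₂) := by
  have hpt : ∀ x : (TCP.lpair c₁ c₂).Point,
      x = Sum.inr ⟨0, Nat.zero_lt_two⟩ ∨ x = Sum.inr ⟨1, Nat.one_lt_two⟩ := by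
    rintro (j | i)
    · exact j.elim0
    · have hi : i.val < 2 := i.isLt
      rcases (show i.val = 0 ∨ i.val = 1 by omega) with h0 | h1
      · exact Or.inl (by rw [show i = ⟨0, Nat.zero_lt_two⟩ from Fin.ext h0])
      · exact Or.inr (by rw [show i = ⟨1, Nat.one_lt_two⟩ from Fin.ext h1])
  constructor
  · intro x y z _ _ hyx hzx
    rcases hpt x with rfl | rfl <;> rcases hpt y with rfl | rfl <;>
      rcases hpt z with rfl | rfl <;> simp_all
  · intro x y _ hxy
    rcases hpt x with rfl | rfl <;> rcases hpt y with rfl | rfl <;>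
      simp_all [TCP.ncolor, TCP.lpair] <;> exact Ne.symm h

end Stmt12Aux
namespace Stmt12Aux
open TCP

lemma ptmap_inj (p q : TCP) : Function.Injective (TCP.ptmap p q) := by
  intro x y hxy
  rcases x with j | i <;> rcases y with j' | i' <;>
    simp only [TCP.ptmap] at hxy
  · rcases hj : finSumFinEquiv.symm j with a | a <;>
      rcases hj' : finSumFinEquiv.symm j' with a' | a' <;>
        rw [hj, hj'] at hxy <;> simp only [Sum.elim_inl, Sum.elim_inr] at hxy
    · obtain rfl : a = a' := by simpa using hxy
      rw [finSumFinEquiv.symm.injective (hj.trans hj'.symm)]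
    · simp at hxy
    · simp at hxy
    · obtain rfl : a = a' := by simpa using hxy
      rw [finSumFinEquiv.symm.injective (hj.trans hj'.symm)]
  · rcases hj : finSumFinEquiv.symm j with a | a <;>
      rcases hi' : finSumFinEquiv.symm i' with a' | a' <;>
        rw [hj, hi'] at hxy <;> simp only [Sum.elim_inl, Sum.elim_inr] at hxy <;> simp at hxy
  · rcases hi : finSumFinEquiv.symm i with a | a <;>
      rcases hj' : finSumFinEquiv.symm j' with a' | a' <;>
        rw [hi, hj'] at hxy <;> simp only [Sum.elim_inl, Sum.elim_inr] at hxy <;> simp at hxy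
  · rcases hi : finSumFinEquiv.symm i with a | a <;>
      rcases hi' : finSumFinEquiv.symm i' with a' | a' <;>
        rw [hi, hi'] at hxy <;> simp only [Sum.elim_inl, Sum.elim_inr] at hxy
    · obtain rfl : a = a' := by simpa using hxy
      rw [finSumFinEquiv.symm.injective (hi.trans hi'.symm)]
    · simp at hxy
    · simp at hxy
    · obtain rfl : a = a' := by simpa using hxy
      rw [finSumFinEquiv.symm.injective (hi.trans hi'.symm)]

lemma tensor_ncolor (p q : TCP) (x : (p.tensor q).Point) :
    (p.tensor q).ncolor x = Sum.elim p.ncolor q.ncolor (TCP.ptmap p q x) := by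
  rcases x with j | i
  · rcases hj : finSumFinEquiv.symm j with a | a <;>
      simp [TCP.ncolor, TCP.tensor, TCP.ptmap, hj]
  · rcases hi : finSumFinEquiv.symm i with a | a <;>
      simp [TCP.ncolor, TCP.tensor, TCP.ptmap, hi]

lemma PW_tensor (p q : TCP) (hp : PW p) (hq : PW q) : PW (p.tensor q) := by
  have hinj := ptmap_inj p q
  constructor
  · intro x y z hxy hxz hyx hzx
    have hxy' : TCP.sumRel p.rel.r q.rel.r (TCP.ptmap p q x) (TCP.ptmap p q y) := hxy
    have hxz' : TCP.sumRel p.rel.r q.rel.r (TCP.ptmap p q x) (TCP.ptmap p q z) := hxz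
    apply hinj
    rcases hx : TCP.ptmap p q x with a | a <;> rw [hx] at hxy' hxz'
    · rcases hy : TCP.ptmap p q y with b | b <;> rw [hy] at hxy'
      · rcases hz : TCP.ptmap p q z with d | d <;> rw [hz] at hxz'
        · have hba : b ≠ a := fun hh => hyx (hinj (by rw [hy, hx, hh]))
          have hda : d ≠ a := fun hh => hzx (hinj (by rw [hz, hx, hh]))
          exact congrArg Sum.inl (hp.1 a b d hxy' hxz' hba hda)
        · exact hxz'.elim
      · exact hxy'.elim
    · rcases hy : TCP.ptmap p q y with b | b <;> rw [hy] at hxy'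
      · exact hxy'.elim
      · rcases hz : TCP.ptmap p q z with d | d <;> rw [hz] at hxz'
        · exact hxz'.elim
        · have hba : b ≠ a := fun hh => hyx (hinj (by rw [hy, hx, hh]))
          have hda : d ≠ a := fun hh => hzx (hinj (by rw [hz, hx, hh]))
          exact congrArg Sum.inr (hq.1 a b d hxy' hxz' hba hda)
  · intro x y hxy hne
    have hxy' : TCP.sumRel p.rel.r q.rel.r (TCP.ptmap p q x) (TCP.ptmap p q y) := hxy
    rw [tensor_ncolor, tensor_ncolor]
    rcases hx : TCP.ptmap p q x with a | a <;> rcases hy : TCP.ptmap p q y with b | b <;>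
      rw [hx, hy] at hxy'
    · simp only [Sum.elim_inl]
      exact hp.2 a b hxy' (fun hh => hne (hinj (by rw [hx, hy, hh])))
    · exact hxy'.elim
    · exact hxy'.elim
    · simp only [Sum.elim_inr]
      exact hq.2 a b hxy' (fun hh => hne (hinj (by rw [hx, hy, hh])))

lemma invol_ncolor (p : TCP) (x : p.invol.Point) :
    p.invol.ncolor x = !(p.ncolor (Sum.swap x)) := by
  rcases x with j | i
  · rfl
  · show p.upColor i = !(!(p.upColor i)); rw [Bool.not_not]

lemma swap_inj {α β : Type*} : Function.Injective (Sum.swap : α ⊕ β → β ⊕ α) := by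
  intro x y h
  rw [← Sum.swap_swap x, ← Sum.swap_swap y, h]

lemma PW_invol (p : TCP) (hp : PW p) : PW p.invol := by
  constructor
  · intro x y z hxy hxz hyx hzx
    have hxy' : p.rel.r (Sum.swap x) (Sum.swap y) := hxy
    have hxz' : p.rel.r (Sum.swap x) (Sum.swap z) := hxz
    exact swap_inj (hp.1 (Sum.swap x) (Sum.swap y) (Sum.swap z) hxy' hxz'
      (fun hh => hyx (swap_inj hh)) (fun hh => hzx (swap_inj hh)))
  · intro x y hxy hne
    have hxy' : p.rel.r (Sum.swap x) (Sum.swap y) := hxy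
    rw [invol_ncolor, invol_ncolor]
    have h2 := hp.2 (Sum.swap x) (Sum.swap y) hxy' (fun hh => hne (swap_inj hh))
    cases hh1 : p.ncolor (Sum.swap x) <;> cases hh2 : p.ncolor (Sum.swap y) <;> simp_all

end Stmt12Aux
namespace Stmt12Aux
open TCP

section Comp

variable (p q : TCP)

/-- Block relation on the disjoint union of the points of `q` and `p`. -/
def Rb : (q.Point ⊕ p.Point) → (q.Point ⊕ p.Point) → Prop
  | .inl a, .inl b => q.rel.r a b
  | .inr a, .inr b => p.rel.r a b
  | .inl _, .inr _ => False
  | .inr _, .inl _ => False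

lemma Rb_symm {x y} (h : Rb p q x y) : Rb p q y x := by
  rcases x with a | a <;> rcases y with b | b
  · exact q.rel.iseqv.symm h
  · exact h.elim
  · exact h.elim
  · exact p.rel.iseqv.symm h

lemma Rb_uniq (hp : PW p) (hq : PW q) {x y z} (h1 : Rb p q x y) (h2 : Rb p q x z)
    (h3 : y ≠ x) (h4 : z ≠ x) : y = z := by
  rcases x with a | a <;> rcases y with b | b <;> rcases z with d | d <;>
    first
    | exact h1.elim
    | exact h2.elim
    | skip
  · exact congrArg Sum.inl (hq.1 a b d h1 h2 (fun hh => h3 (by rw [hh]))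
      (fun hh => h4 (by rw [hh])))
  · exact congrArg Sum.inr (hp.1 a b d h1 h2 (fun hh => h3 (by rw [hh]))
      (fun hh => h4 (by rw [hh])))

/-- Sign (normalized color) of a point of the union. -/
def sgB (x : q.Point ⊕ p.Point) : Bool := Sum.elim q.ncolor p.ncolor x

lemma Rb_sign (hp : PW p) (hq : PW q) {x y} (h : Rb p q x y) (hne : x ≠ y) :
    sgB p q x ≠ sgB p q y := by
  rcases x with a | a <;> rcases y with b | b
  · exact hq.2 a b h (fun hh => hne (by rw [hh]))
  · exact h.elim
  · exact h.elim
  · exact hp.2 a b h (fun hh => hne (by rw [hh]))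

/-- The block partner involution. -/
noncomputable def sig (x : q.Point ⊕ p.Point) : q.Point ⊕ p.Point :=
  if h : ∃ y, Rb p q x y ∧ y ≠ x then h.choose else x

lemma sig_eq (hp : PW p) (hq : PW q) {x y} (h1 : Rb p q x y) (h2 : y ≠ x) :
    sig p q x = y := by
  have hex : ∃ y, Rb p q x y ∧ y ≠ x := ⟨y, h1, h2⟩
  rw [sig, dif_pos hex]
  exact Rb_uniq p q hp hq hex.choose_spec.1 h1 hex.choose_spec.2 h2

lemma sig_move {x} (h : sig p q x ≠ x) : Rb p q x (sig p q x) := by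
  by_cases hex : ∃ y, Rb p q x y ∧ y ≠ x
  · rw [sig, dif_pos hex]
    exact hex.choose_spec.1
  · exact absurd (by rw [sig, dif_neg hex]) h

lemma sig_sig (hp : PW p) (hq : PW q) (x) : sig p q (sig p q x) = x := by
  by_cases hex : ∃ y, Rb p q x y ∧ y ≠ x
  · have hx : sig p q x = hex.choose := dif_pos hex
    obtain ⟨h1, h2⟩ := hex.choose_spec
    rw [hx]
    exact sig_eq p q hp hq (Rb_symm p q h1) (fun hh => h2 hh.symm)
  · have hx : sig p q x = x := dif_neg hex
    rw [hx, hx]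

lemma sgB_sig (hp : PW p) (hq : PW q) {x} (h : sig p q x ≠ x) :
    sgB p q (sig p q x) = !(sgB p q x) := by
  have := Rb_sign p q hp hq (sig_move p q h) (fun hh => h hh.symm)
  cases h1 : sgB p q x <;> cases h2 : sgB p q (sig p q x) <;> simp_all

variable (hl : p.upper = q.lower)

/-- The middle identification involution. -/
def tau : (q.Point ⊕ p.Point) → (q.Point ⊕ p.Point)
  | .inl (.inl j) => .inl (.inl j)
  | .inl (.inr m) => .inr (.inl (Fin.cast hl.symm m))
  | .inr (.inl j) => .inl (.inr (Fin.cast hl j))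
  | .inr (.inr i) => .inr (.inr i)

lemma tau_tau (x) : tau p q hl (tau p q hl x) = x := by
  rcases x with (j | m) | (j | i) <;> simp [tau]

variable (hcol : ∀ j : Fin p.upper, p.upColor j = q.loColor (Fin.cast hl j))

include hcol in
lemma sgB_tau {x} (h : tau p q hl x ≠ x) : sgB p q (tau p q hl x) = !(sgB p q x) := by
  rcases x with (j | m) | (j | i)
  · exact absurd rfl h
  · show p.ncolor (Sum.inl (Fin.cast hl.symm m)) = !(q.ncolor (Sum.inr m))
    have hc := hcol (Fin.cast hl.symm m)
    have hm : Fin.cast hl (Fin.cast hl.symm m) = m := by ext; simp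
    rw [hm] at hc
    show (!(p.upColor (Fin.cast hl.symm m))) = (!(q.loColor m))
    rw [hc]
  · show q.ncolor (Sum.inr (Fin.cast hl j)) = !(p.ncolor (Sum.inl j))
    show q.loColor (Fin.cast hl j) = (!(!(p.upColor j)))
    rw [Bool.not_not, hcol j]
  · exact absurd rfl h

/-- The alternating chain from a point. -/
noncomputable def chain (u : q.Point ⊕ p.Point) : ℕ → q.Point ⊕ p.Point
  | 0 => u
  | n + 1 => if Even n then sig p q (chain u n) else tau p q hl (chain u n)

variable {u : q.Point ⊕ p.Point}

lemma chain_succ_even {n : ℕ} (hn : Even n) :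
    chain p q hl u (n + 1) = sig p q (chain p q hl u n) := by
  rw [chain, if_pos hn]

lemma chain_succ_odd {n : ℕ} (hn : ¬ Even n) :
    chain p q hl u (n + 1) = tau p q hl (chain p q hl u n) := by
  rw [chain, if_neg hn]

end Comp

end Stmt12Aux
namespace Stmt12Aux
open TCP

section Comp2

variable (p q : TCP) (hl : p.upper = q.lower)
variable (hcol : ∀ j : Fin p.upper, p.upColor j = q.loColor (Fin.cast hl j))
variable (hp : PW p) (hq : PW q)
variable {u : q.Point ⊕ p.Point}

include hp hq in
lemma stall_reflect {j : ℕ} (hj : chain p q hl u (j+1) = chain p q hl u j) :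
    ∀ t, t ≤ j → chain p q hl u (j+1+t) = chain p q hl u (j-t) := by
  intro t
  induction t with
  | zero => intro _; simpa using hj
  | succ t ih =>
    intro ht
    have ih' := ih (by omega)
    have hpar : Even (j+1+t) ↔ Even (j-(t+1)) := by
      rw [Nat.even_iff, Nat.even_iff]; omega
    have hidx1 : j+1+(t+1) = (j+1+t)+1 := by omega
    have hidx2 : j-t = (j-(t+1))+1 := by omega
    by_cases hE : Even (j+1+t)
    · rw [hidx1, chain_succ_even p q hl hE, ih', hidx2,
        chain_succ_even p q hl (hpar.1 hE), sig_sig p q hp hq]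
    · rw [hidx1, chain_succ_odd p q hl hE, ih', hidx2,
        chain_succ_odd p q hl (fun hh => hE (hpar.2 hh)), tau_tau]

include hp hq in
lemma stall_period (hu : tau p q hl u = u) {j : ℕ}
    (hj : chain p q hl u (j+1) = chain p q hl u j) :
    ∀ m, chain p q hl u (2*j+2+m) = chain p q hl u m := by
  have h0 := stall_reflect p q hl hp hq hj j le_rfl
  rw [show j+1+j = 2*j+1 from by omega, Nat.sub_self] at h0
  have h1 : chain p q hl u (2*j+1) = u := h0
  have h2 : chain p q hl u (2*j+2) = u := by
    rw [show 2*j+2 = (2*j+1)+1 from by omega,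
      chain_succ_odd p q hl (by rw [Nat.even_iff]; omega), h1, hu]
  intro m
  induction m with
  | zero => exact h2
  | succ m ih =>
    have hpar : Even (2*j+2+m) ↔ Even m := by rw [Nat.even_iff, Nat.even_iff]; omega
    show chain p q hl u ((2*j+2+m)+1) = chain p q hl u (m+1)
    by_cases hE : Even m
    · rw [chain_succ_even p q hl (hpar.2 hE), chain_succ_even p q hl hE, ih]
    · rw [chain_succ_odd p q hl (fun hh => hE (hpar.1 hh)), chain_succ_odd p q hl hE, ih]

include hp hq in
lemma stall_confine (hu : tau p q hl u = u) {j : ℕ}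
    (hj : chain p q hl u (j+1) = chain p q hl u j) :
    ∀ n, ∃ i, i ≤ j ∧ chain p q hl u n = chain p q hl u i := by
  intro n
  induction n using Nat.strong_induction_on with
  | _ n ih =>
    by_cases h1 : n ≤ j
    · exact ⟨n, h1, rfl⟩
    · by_cases h2 : n ≤ 2*j+1
      · refine ⟨j - (n - j - 1), by omega, ?_⟩
        have hr := stall_reflect p q hl hp hq hj (n-j-1) (by omega)
        rw [show j+1+(n-j-1) = n from by omega] at hr
        exact hr
      · obtain ⟨i, hi, hci⟩ := ih (n - (2*j+2)) (by omega)
        refine ⟨i, hi, ?_⟩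
        rw [← hci]
        have hper := stall_period p q hl hp hq hu hj (n - (2*j+2))
        rw [show 2*j+2+(n-(2*j+2)) = n from by omega] at hper
        exact hper

lemma stall_exists (hu : tau p q hl u = u) {n : ℕ}
    (hen : tau p q hl (chain p q hl u n) = chain p q hl u n)
    (hnn : chain p q hl u n ≠ u) :
    ∃ j, chain p q hl u (j+1) = chain p q hl u j := by
  rcases n with _ | n'
  · exact absurd rfl hnn
  · by_cases hE : Even (n'+1)
    · refine ⟨n', ?_⟩
      have hnE : ¬ Even n' := by
        rw [Nat.even_add_one] at hE
        simpa using hE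
      have hstep : chain p q hl u (n'+1) = tau p q hl (chain p q hl u n') :=
        chain_succ_odd p q hl hnE
      have h3 := congrArg (tau p q hl) hstep
      rw [tau_tau] at h3
      rw [hen] at h3
      exact h3
    · refine ⟨n'+1, ?_⟩
      rw [chain_succ_odd p q hl hE, hen]

lemma mid_ext (hst : ∃ j, chain p q hl u (j+1) = chain p q hl u j) {i : ℕ}
    (h1 : 1 ≤ i) (h2 : i ≤ Nat.find hst)
    (hext : tau p q hl (chain p q hl u i) = chain p q hl u i) :
    i = Nat.find hst ∧ ¬ Even i := by
  by_cases hE : Even i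
  · exfalso
    have hi2 : 2 ≤ i := by
      obtain ⟨k, hk⟩ := hE; omega
    have hstep : chain p q hl u i = tau p q hl (chain p q hl u (i-1)) := by
      rw [show i = (i-1)+1 from by omega]
      exact chain_succ_odd p q hl (by rw [Nat.even_iff] at hE ⊢; omega)
    have h3 := congrArg (tau p q hl) hstep
    rw [tau_tau, hext] at h3
    have h4 : chain p q hl u ((i-1)+1) = chain p q hl u (i-1) := by
      rw [show i-1+1 = i from by omega]
      exact h3
    exact Nat.find_min hst (show i-1 < Nat.find hst from by omega) h4
  · have hstall : chain p q hl u (i+1) = chain p q hl u i := by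
      rw [chain_succ_odd p q hl hE, hext]
    have hge : ¬ i < Nat.find hst := fun hlt => Nat.find_min hst hlt hstall
    exact ⟨by omega, hE⟩

include hp hq hcol in
lemma sign_alt (hst : ∃ j, chain p q hl u (j+1) = chain p q hl u j) :
    ∀ i, i ≤ Nat.find hst →
      sgB p q (chain p q hl u i) = if Even i then sgB p q u else !(sgB p q u) := by
  intro i
  induction i with
  | zero => intro _; simp; rfl
  | succ i ih =>
    intro hi
    have ih' := ih (by omega)
    have hmv : chain p q hl u (i+1) ≠ chain p q hl u i :=
      Nat.find_min hst (by omega)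
    by_cases hE : Even i
    · rw [chain_succ_even p q hl hE] at hmv ⊢
      rw [sgB_sig p q hp hq hmv, ih', if_pos hE,
        if_neg (by simp [Nat.even_add_one, hE])]
    · rw [chain_succ_odd p q hl hE] at hmv ⊢
      rw [sgB_tau p q hl hcol hmv, ih', if_neg hE,
        if_pos (by simp [Nat.even_add_one, hE]), Bool.not_not]

include hp hq hcol in
lemma key (hu : tau p q hl u = u) {n m : ℕ}
    (hen : tau p q hl (chain p q hl u n) = chain p q hl u n)
    (hem : tau p q hl (chain p q hl u m) = chain p q hl u m)
    (hnn : chain p q hl u n ≠ u) (hnm : chain p q hl u m ≠ u) :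
    chain p q hl u n = chain p q hl u m ∧ sgB p q (chain p q hl u n) ≠ sgB p q u := by
  have hst : ∃ j, chain p q hl u (j+1) = chain p q hl u j :=
    stall_exists p q hl hu hen hnn
  have hloc : ∀ {k : ℕ}, tau p q hl (chain p q hl u k) = chain p q hl u k →
      chain p q hl u k ≠ u → chain p q hl u k = chain p q hl u (Nat.find hst) := by
    intro k hek hnk
    obtain ⟨i, hij, hci⟩ := stall_confine p q hl hp hq hu (Nat.find_spec hst) k
    rcases Nat.eq_zero_or_pos i with rfl | hipos
    · exact absurd hci hnk
    · have hm := mid_ext p q hl hst hipos hij (by rw [← hci]; exact hek)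
      rw [hci, hm.1]
  have h1 := hloc hen hnn
  have h2 := hloc hem hnm
  have hodd : ¬ Even (Nat.find hst) := by
    obtain ⟨i, hij, hci⟩ := stall_confine p q hl hp hq hu (Nat.find_spec hst) n
    rcases Nat.eq_zero_or_pos i with rfl | hipos
    · exact absurd hci hnn
    · have hm := mid_ext p q hl hst hipos hij (by rw [← hci]; exact hen)
      exact hm.1 ▸ hm.2
  refine ⟨h1.trans h2.symm, ?_⟩
  rw [h1, sign_alt p q hl hcol hp hq hst (Nat.find hst) le_rfl, if_neg hodd]
  exact Bool.not_ne_self _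

/-- One-step relation generated by the two involutions. -/
def r0 (x y : q.Point ⊕ p.Point) : Prop := y = sig p q x ∨ y = tau p q hl x

include hp hq in
lemma eqvgen_r0_mem (hu : tau p q hl u = u) {a b : q.Point ⊕ p.Point}
    (h : Relation.EqvGen (r0 p q hl) a b) :
    (a ∈ Set.range (chain p q hl u)) ↔ (b ∈ Set.range (chain p q hl u)) := by
  have hsigcl : ∀ n, ∃ m, sig p q (chain p q hl u n) = chain p q hl u m := by
    intro n
    rcases n with _ | n'
    · exact ⟨1, (chain_succ_even p q hl Even.zero).symm⟩
    · by_cases hE : Even n'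
      · exact ⟨n', by rw [chain_succ_even p q hl hE, sig_sig p q hp hq]⟩
      · exact ⟨n'+2, (chain_succ_even p q hl (by rw [Nat.even_add_one]; exact hE)).symm⟩
  have htaucl : ∀ n, ∃ m, tau p q hl (chain p q hl u n) = chain p q hl u m := by
    intro n
    rcases n with _ | n'
    · exact ⟨0, hu⟩
    · by_cases hE : Even n'
      · exact ⟨n'+2, (chain_succ_odd p q hl (by
          rw [Nat.even_add_one]; simpa using hE)).symm⟩
      · exact ⟨n', by rw [chain_succ_odd p q hl hE, tau_tau]⟩
  induction h with
  | rel x y hxy =>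
    constructor
    · rintro ⟨n, rfl⟩
      rcases hxy with h1 | h1
      · obtain ⟨m, hm⟩ := hsigcl n
        exact ⟨m, hm.symm.trans h1.symm⟩
      · obtain ⟨m, hm⟩ := htaucl n
        exact ⟨m, hm.symm.trans h1.symm⟩
    · rintro ⟨n, rfl⟩
      rcases hxy with h1 | h1
      · have hx : x = sig p q (chain p q hl u n) := by
          rw [h1]
          exact (sig_sig p q hp hq x).symm
        obtain ⟨m, hm⟩ := hsigcl n
        exact ⟨m, hm.symm.trans hx.symm⟩
      · have hx : x = tau p q hl (chain p q hl u n) := by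
          rw [h1]
          exact (tau_tau p q hl x).symm
        obtain ⟨m, hm⟩ := htaucl n
        exact ⟨m, hm.symm.trans hx.symm⟩
  | refl x => exact Iff.rfl
  | symm x y _ ih => exact ih.symm
  | trans x y z _ _ ih1 ih2 => exact ih1.trans ih2

include hp hq in
lemma compRel_sub {x y : q.Point ⊕ p.Point} (h : TCP.compRel p q hl x y) :
    Relation.EqvGen (r0 p q hl) x y := by
  rcases h with ⟨a, b, rfl, rfl, hab⟩ | ⟨a, b, rfl, rfl, hab⟩ | ⟨j, rfl, rfl⟩ | ⟨j, hy, hx⟩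
  · by_cases hab' : a = b
    · rw [hab']; exact Relation.EqvGen.refl _
    · refine Relation.EqvGen.rel _ _ (Or.inl ?_)
      exact (sig_eq p q hp hq (show Rb p q (Sum.inl a) (Sum.inl b) from hab)
        (fun hh => hab' (Sum.inl.inj hh).symm)).symm
  · by_cases hab' : a = b
    · rw [hab']; exact Relation.EqvGen.refl _
    · refine Relation.EqvGen.rel _ _ (Or.inl ?_)
      exact (sig_eq p q hp hq (show Rb p q (Sum.inr a) (Sum.inr b) from hab)
        (fun hh => hab' (Sum.inr.inj hh).symm)).symm
  · refine Relation.EqvGen.rel _ _ (Or.inr ?_)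
    show Sum.inr (Sum.inl j) = tau p q hl (Sum.inl (Sum.inr (Fin.cast hl j)))
    show Sum.inr (Sum.inl j) = Sum.inr (Sum.inl (Fin.cast hl.symm (Fin.cast hl j)))
    rfl
  · subst hy; subst hx
    exact Relation.EqvGen.rel _ _ (Or.inr rfl)

include hp hq in
lemma eqvgen_compRel_le {x y : q.Point ⊕ p.Point}
    (h : Relation.EqvGen (TCP.compRel p q hl) x y) :
    Relation.EqvGen (r0 p q hl) x y := by
  induction h with
  | rel a b hab => exact compRel_sub p q hl hp hq hab
  | refl a => exact Relation.EqvGen.refl a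
  | symm a b _ ih => exact Relation.EqvGen.symm a b ih
  | trans a b c _ _ ih1 ih2 => exact Relation.EqvGen.trans a b c ih1 ih2

end Comp2

end Stmt12Aux
namespace Stmt12Aux
open TCP

lemma PW_comp (p q : TCP) (h : TCP.Composable p q) (hp : PW p) (hq : PW q) :
    PW (p.comp q h) := by
  have hcol : ∀ j : Fin p.upper, p.upColor j = q.loColor (Fin.cast h.len j) := h.col
  -- the embedding of the points of the composition
  let ι : (p.comp q h).Point → q.Point ⊕ p.Point := fun x => match x with
    | .inl j => .inl (.inl j)
    | .inr i => .inr (.inr i)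
  have hι_inj : ∀ x y, ι x = ι y → x = y := by
    rintro (j | i) (j' | i') hh
    · simp only [ι, Sum.inl.injEq] at hh
      exact congrArg Sum.inl (Sum.inl.inj hh)
    · simp [ι] at hh
    · simp [ι] at hh
    · simp only [ι, Sum.inr.injEq] at hh
      exact congrArg Sum.inr (Sum.inr.inj hh)
  have hι_ext : ∀ x, tau p q h.len (ι x) = ι x := by
    rintro (j | i) <;> rfl
  have hι_sg : ∀ x, sgB p q (ι x) = (p.comp q h).ncolor x := by
    rintro (j | i) <;> rfl
  have hrel : ∀ x y, (p.comp q h).rel.r x y →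
      Relation.EqvGen (TCP.compRel p q h.len) (ι x) (ι y) := by
    rintro (j | i) (j' | i') hh <;> exact hh
  constructor
  · intro x y z hxy hxz hyx hzx
    have h1 := eqvgen_compRel_le p q h.len hp hq (hrel x y hxy)
    have h2 := eqvgen_compRel_le p q h.len hp hq (hrel x z hxz)
    have hmem1 : ι y ∈ Set.range (chain p q h.len (ι x)) :=
      (eqvgen_r0_mem p q h.len hp hq (hι_ext x) h1).1 ⟨0, rfl⟩
    have hmem2 : ι z ∈ Set.range (chain p q h.len (ι x)) :=
      (eqvgen_r0_mem p q h.len hp hq (hι_ext x) h2).1 ⟨0, rfl⟩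
    obtain ⟨n, hn⟩ := hmem1
    obtain ⟨m, hm⟩ := hmem2
    have hk := key p q h.len hcol hp hq (hι_ext x)
      (n := n) (m := m)
      (by rw [hn]; exact hι_ext y) (by rw [hm]; exact hι_ext z)
      (by rw [hn]; exact fun hh => hyx (hι_inj y x hh))
      (by rw [hm]; exact fun hh => hzx (hι_inj z x hh))
    apply hι_inj
    rw [← hn, ← hm]
    exact hk.1
  · intro x y hxy hne
    have h1 := eqvgen_compRel_le p q h.len hp hq (hrel x y hxy)
    have hmem1 : ι y ∈ Set.range (chain p q h.len (ι x)) :=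
      (eqvgen_r0_mem p q h.len hp hq (hι_ext x) h1).1 ⟨0, rfl⟩
    obtain ⟨n, hn⟩ := hmem1
    have hk := key p q h.len hcol hp hq (hι_ext x)
      (n := n) (m := n)
      (by rw [hn]; exact hι_ext y) (by rw [hn]; exact hι_ext y)
      (by rw [hn]; exact fun hh => hne (hι_inj y x hh).symm)
      (by rw [hn]; exact fun hh => hne (hι_inj y x hh).symm)
    have hs := hk.2
    rw [hn, hι_sg y, hι_sg x] at hs
    exact fun hh => hs (hh.symm)

end Stmt12Aux

/-- partitions with blocks of at most two legs, all two-leg blocks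
neutral, form a category. -/
theorem stmt12 :
    TCP.IsCategory {p : TCP | ∀ B : Finset p.Point, p.IsBlock B →
      B.card ≤ 2 ∧ (B.card = 2 → p.csum B = 0)} := by
  have hmem : ∀ p : TCP, (p ∈ {p : TCP | ∀ B : Finset p.Point, p.IsBlock B →
      B.card ≤ 2 ∧ (B.card = 2 → p.csum B = 0)}) ↔ Stmt12Aux.PW p :=
    fun p => Stmt12Aux.mem_iff_PW p
  refine ⟨?_, ?_, ?_, ?_, ?_, ?_, ?_, ?_⟩
  · exact (hmem _).2 Stmt12Aux.PW_empty
  · exact (hmem _).2 (Stmt12Aux.PW_id true)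
  · exact (hmem _).2 (Stmt12Aux.PW_id false)
  · exact (hmem _).2 (Stmt12Aux.PW_lpair true false (by decide))
  · exact (hmem _).2 (Stmt12Aux.PW_lpair false true (by decide))
  · intro p q hp hq
    exact (hmem _).2 (Stmt12Aux.PW_tensor p q ((hmem p).1 hp) ((hmem q).1 hq))
  · intro p hp
    exact (hmem _).2 (Stmt12Aux.PW_invol p ((hmem p).1 hp))
  · intro p q hc hp hq
    exact (hmem _).2 (Stmt12Aux.PW_comp p q hc ((hmem p).1 hp) ((hmem q).1 hq))
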